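/- For n = d = 3 (a 3×3 matrix of variables with S_3 permuting columns), the ideal J_3 generated by alternating polynomials equals the ideal I(Δ_3) of the big diagonal. -/
import Mathlib

open MvPolynomial

set_option linter.unusedSectionVars false

namespace AlternatingDiagonalAux

variable {k : Type*} [Field k] [CharZero k]

/-- The set of alternating polynomials. -/
def Sset (k : Type*) [Field k] : Set (MvPolynomial (Fin 3 × Fin 3) k) :=
  {g | ∀ σ : Equiv.Perm (Fin 3),
      rename (fun p : Fin 3 × Fin 3 => (p.1, σ p.2)) g = (Equiv.Perm.sign σ : ℤ) • g}

noncomputable def uu (k : Type*) [Field k] (i : Fin 3) : MvPolynomial (Fin 3 × Fin 3) k :=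
  X (i, 0) - X (i, 1)

noncomputable def vv (k : Type*) [Field k] (i : Fin 3) : MvPolynomial (Fin 3 × Fin 3) k :=
  X (i, 0) - X (i, 2)

noncomputable def ww (k : Type*) [Field k] (i : Fin 3) : MvPolynomial (Fin 3 × Fin 3) k :=
  X (i, 2) - X (i, 1)

noncomputable def MM (k : Type*) [Field k] (i j : Fin 3) : MvPolynomial (Fin 3 × Fin 3) k :=
  uu k i * vv k j - uu k j * vv k i

noncomputable def TT (k : Type*) [Field k] (i j l : Fin 3) : MvPolynomial (Fin 3 × Fin 3) k :=
  uu k i * vv k j * ww k l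

noncomputable def QQ (k : Type*) [Field k] (i j l : Fin 3) : MvPolynomial (Fin 3 × Fin 3) k :=
  TT k i j l + TT k i l j + TT k j i l + TT k j l i + TT k l i j + TT k l j i

/-- Generic kernel lemma for substitutions. -/
lemma sub_aeval_mem (s : Fin 3 × Fin 3 → MvPolynomial (Fin 3 × Fin 3) k)
    (f : MvPolynomial (Fin 3 × Fin 3) k) :
    f - aeval s f ∈ Ideal.span (Set.range fun v => (X v : MvPolynomial (Fin 3 × Fin 3) k) - s v) := by
  induction f using MvPolynomial.induction_on with
  | C a => simp
  | add p q hp hq =>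
      have h : p + q - aeval s (p + q) = (p - aeval s p) + (q - aeval s q) := by
        rw [map_add]; ring
      rw [h]; exact Ideal.add_mem _ hp hq
  | mul_X p v hp =>
      have h : p * X v - aeval s (p * X v)
          = (p - aeval s p) * X v + aeval s p * (X v - s v) := by
        rw [map_mul, aeval_X]; ring
      rw [h]
      exact Ideal.add_mem _ (Ideal.mul_mem_right _ _ hp)
        (Ideal.mul_mem_left _ _ (Ideal.subset_span ⟨v, rfl⟩))

lemma eval_aeval (q : Fin 3 × Fin 3 → k) (s : Fin 3 × Fin 3 → MvPolynomial (Fin 3 × Fin 3) k)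
    (f : MvPolynomial (Fin 3 × Fin 3) k) :
    eval q (aeval s f) = eval (fun v => eval q (s v)) f := by
  induction f using MvPolynomial.induction_on with
  | C a => simp
  | add p r hp hr => rw [map_add, map_add, hp, hr, map_add]
  | mul_X p v hp => rw [map_mul, map_mul, aeval_X, hp, map_mul, eval_X]

lemma mem_span_triple {a b c x : MvPolynomial (Fin 3 × Fin 3) k}
    (h : x ∈ Ideal.span ({a, b, c} : Set (MvPolynomial (Fin 3 × Fin 3) k))) :
    ∃ p q r, x = p * a + q * b + r * c := by
  rw [Ideal.mem_span_insert] at h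
  obtain ⟨p, z, hz, rfl⟩ := h
  rw [Ideal.mem_span_insert] at hz
  obtain ⟨q, z', hz', rfl⟩ := hz
  rw [Ideal.mem_span_singleton'] at hz'
  obtain ⟨r, rfl⟩ := hz'
  exact ⟨p, q, r, by ring⟩

end AlternatingDiagonalAux

namespace AlternatingDiagonalAux2
open AlternatingDiagonalAux
variable {k : Type*} [Field k] [CharZero k]

lemma alternating_of_two {g : MvPolynomial (Fin 3 × Fin 3) k}
    (h1 : rename (fun p : Fin 3 × Fin 3 => (p.1, Equiv.swap (0:Fin 3) 1 p.2)) g = -g)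
    (h2 : rename (fun p : Fin 3 × Fin 3 => (p.1, Equiv.swap (1:Fin 3) 2 p.2)) g = -g) :
    g ∈ Sset k := by
  have comp : ∀ (α β : Equiv.Perm (Fin 3)),
      (fun p : Fin 3 × Fin 3 => (p.1, (α * β) p.2))
        = (fun p : Fin 3 × Fin 3 => (p.1, α p.2)) ∘ (fun p : Fin 3 × Fin 3 => (p.1, β p.2)) := by
    intro α β; funext p; simp
  have key : ∀ τ : Equiv.Perm (Fin 3), τ = 1 ∨ τ = Equiv.swap 0 1 ∨ τ = Equiv.swap 1 2 ∨
      τ = Equiv.swap 0 1 * Equiv.swap 1 2 ∨ τ = Equiv.swap 1 2 * Equiv.swap 0 1 ∨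
      τ = Equiv.swap 0 1 * Equiv.swap 1 2 * Equiv.swap 0 1 := by decide
  have hone : (fun p : Fin 3 × Fin 3 => (p.1, (1 : Equiv.Perm (Fin 3)) p.2)) = id := by
    funext p; simp
  have c1 : rename (fun p : Fin 3 × Fin 3 =>
      (p.1, (Equiv.swap (0:Fin 3) 1 * Equiv.swap 1 2 : Equiv.Perm (Fin 3)) p.2)) g = g := by
    rw [comp, ← rename_rename, h2, map_neg, h1, neg_neg]
  have c2 : rename (fun p : Fin 3 × Fin 3 =>
      (p.1, (Equiv.swap (1:Fin 3) 2 * Equiv.swap 0 1 : Equiv.Perm (Fin 3)) p.2)) g = g := by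
    rw [comp, ← rename_rename, h1, map_neg, h2, neg_neg]
  have c3 : rename (fun p : Fin 3 × Fin 3 =>
      (p.1, (Equiv.swap (0:Fin 3) 1 * Equiv.swap 1 2 * Equiv.swap 0 1 : Equiv.Perm (Fin 3)) p.2)) g = -g := by
    rw [comp, ← rename_rename, h1, map_neg, c1]
  intro σ
  rcases key σ with h|h|h|h|h|h <;> subst h
  · rw [hone, rename_id]
    norm_num
  · rw [h1, show ((Equiv.Perm.sign (Equiv.swap (0:Fin 3) 1)) : ℤ) = -1 from by decide,
      neg_one_zsmul]
  · rw [h2, show ((Equiv.Perm.sign (Equiv.swap (1:Fin 3) 2)) : ℤ) = -1 from by decide,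
      neg_one_zsmul]
  · rw [c1, show ((Equiv.Perm.sign (Equiv.swap (0:Fin 3) 1 * Equiv.swap 1 2)) : ℤ) = 1 from by
      decide, one_zsmul]
  · rw [c2, show ((Equiv.Perm.sign (Equiv.swap (1:Fin 3) 2 * Equiv.swap 0 1)) : ℤ) = 1 from by
      decide, one_zsmul]
  · rw [c3, show ((Equiv.Perm.sign (Equiv.swap (0:Fin 3) 1 * Equiv.swap 1 2 * Equiv.swap 0 1)) :
      ℤ) = -1 from by decide, neg_one_zsmul]

lemma sw01 : Equiv.swap (0:Fin 3) 1 0 = 1 ∧ Equiv.swap (0:Fin 3) 1 1 = 0 ∧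
    Equiv.swap (0:Fin 3) 1 2 = 2 := by decide

lemma MM_alt (i j : Fin 3) : MM k i j ∈ Sset k := by
  apply alternating_of_two
  · simp only [MM, uu, vv, map_sub, map_mul, rename_X,
      show Equiv.swap (0:Fin 3) 1 0 = 1 from by decide,
      show Equiv.swap (0:Fin 3) 1 1 = 0 from by decide,
      show Equiv.swap (0:Fin 3) 1 2 = 2 from by decide]
    ring
  · simp only [MM, uu, vv, map_sub, map_mul, rename_X,
      show Equiv.swap (1:Fin 3) 2 0 = 0 from by decide,
      show Equiv.swap (1:Fin 3) 2 1 = 2 from by decide,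
      show Equiv.swap (1:Fin 3) 2 2 = 1 from by decide]
    ring

lemma QQ_alt (i j l : Fin 3) : QQ k i j l ∈ Sset k := by
  apply alternating_of_two
  · simp only [QQ, TT, uu, vv, ww, map_add, map_sub, map_mul, rename_X,
      show Equiv.swap (0:Fin 3) 1 0 = 1 from by decide,
      show Equiv.swap (0:Fin 3) 1 1 = 0 from by decide,
      show Equiv.swap (0:Fin 3) 1 2 = 2 from by decide]
    ring
  · simp only [QQ, TT, uu, vv, ww, map_add, map_sub, map_mul, rename_X,
      show Equiv.swap (1:Fin 3) 2 0 = 0 from by decide,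
      show Equiv.swap (1:Fin 3) 2 1 = 2 from by decide,
      show Equiv.swap (1:Fin 3) 2 2 = 1 from by decide]
    ring

end AlternatingDiagonalAux2

namespace AlternatingDiagonalAux3
open AlternatingDiagonalAux AlternatingDiagonalAux2
variable {k : Type*} [Field k] [CharZero k]

/-- collapse column 1 onto column 0 -/
noncomputable def s01 (k : Type*) [Field k] (v : Fin 3 × Fin 3) :
    MvPolynomial (Fin 3 × Fin 3) k := if v.2 = 1 then X (v.1, 0) else X v
/-- collapse column 2 onto column 0 -/
noncomputable def s02 (k : Type*) [Field k] (v : Fin 3 × Fin 3) :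
    MvPolynomial (Fin 3 × Fin 3) k := if v.2 = 2 then X (v.1, 0) else X v
/-- collapse column 2 onto column 1 -/
noncomputable def s12 (k : Type*) [Field k] (v : Fin 3 × Fin 3) :
    MvPolynomial (Fin 3 × Fin 3) k := if v.2 = 2 then X (v.1, 1) else X v
/-- collapse the single variable `X (m,1)` onto `X (m,0)` -/
noncomputable def sr (k : Type*) [Field k] (m : Fin 3) (v : Fin 3 × Fin 3) :
    MvPolynomial (Fin 3 × Fin 3) k := if v = (m, 1) then X (m, 0) else X v

lemma s02_uu (i : Fin 3) : aeval (s02 k) (uu k i) = uu k i := by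
  simp [uu, s02]
lemma s12_uu (i : Fin 3) : aeval (s12 k) (uu k i) = uu k i := by
  simp [uu, s12]
lemma s12_vv (i : Fin 3) : aeval (s12 k) (vv k i) = uu k i := by
  simp [vv, uu, s12]

lemma uu_ne_zero (m : Fin 3) : (uu k m : MvPolynomial (Fin 3 × Fin 3) k) ≠ 0 := by
  intro h
  have h2 := congrArg (eval (fun v : Fin 3 × Fin 3 => if v = (m, 0) then (1 : k) else 0)) h
  simp [uu] at h2

lemma uu_mem (i : Fin 3) :
    (uu k i : MvPolynomial (Fin 3 × Fin 3) k) ∈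
      Ideal.span ({uu k 0, uu k 1, uu k 2} : Set (MvPolynomial (Fin 3 × Fin 3) k)) := by
  fin_cases i
  · exact Ideal.subset_span (Set.mem_insert _ _)
  · exact Ideal.subset_span (Set.mem_insert_of_mem _ (Set.mem_insert _ _))
  · exact Ideal.subset_span (Set.mem_insert_of_mem _ (Set.mem_insert_of_mem _ rfl))

lemma vv_mem (i : Fin 3) :
    (vv k i : MvPolynomial (Fin 3 × Fin 3) k) ∈
      Ideal.span ({vv k 0, vv k 1, vv k 2} : Set (MvPolynomial (Fin 3 × Fin 3) k)) := by
  fin_cases i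
  · exact Ideal.subset_span (Set.mem_insert _ _)
  · exact Ideal.subset_span (Set.mem_insert_of_mem _ (Set.mem_insert _ _))
  · exact Ideal.subset_span (Set.mem_insert_of_mem _ (Set.mem_insert_of_mem _ rfl))

lemma ww_mem (i : Fin 3) :
    (ww k i : MvPolynomial (Fin 3 × Fin 3) k) ∈
      Ideal.span ({ww k 0, ww k 1, ww k 2} : Set (MvPolynomial (Fin 3 × Fin 3) k)) := by
  fin_cases i
  · exact Ideal.subset_span (Set.mem_insert _ _)
  · exact Ideal.subset_span (Set.mem_insert_of_mem _ (Set.mem_insert _ _))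
  · exact Ideal.subset_span (Set.mem_insert_of_mem _ (Set.mem_insert_of_mem _ rfl))

lemma mem_span_uu_of_s01 (f : MvPolynomial (Fin 3 × Fin 3) k) (h : aeval (s01 k) f = 0) :
    f ∈ Ideal.span ({uu k 0, uu k 1, uu k 2} : Set (MvPolynomial (Fin 3 × Fin 3) k)) := by
  have h1 := sub_aeval_mem (s01 k) f
  rw [h, sub_zero] at h1
  refine Ideal.span_le.mpr ?_ h1
  rintro x ⟨⟨i, c⟩, rfl⟩
  fin_cases c
  · simp [s01]
  · show (X (i, 1) : MvPolynomial (Fin 3 × Fin 3) k) - s01 k (i, 1) ∈ _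
    have h3 : (X (i, 1) : MvPolynomial (Fin 3 × Fin 3) k) - s01 k (i, 1) = -uu k i := by
      simp [s01, uu]
    rw [h3]
    exact neg_mem (uu_mem i)
  · simp [s01]

lemma sub_s02_mem (a : MvPolynomial (Fin 3 × Fin 3) k) :
    a - aeval (s02 k) a ∈
      Ideal.span ({vv k 0, vv k 1, vv k 2} : Set (MvPolynomial (Fin 3 × Fin 3) k)) := by
  refine Ideal.span_le.mpr ?_ (sub_aeval_mem (s02 k) a)
  rintro x ⟨⟨i, c⟩, rfl⟩
  fin_cases c
  · simp [s02]
  · simp [s02]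
  · show (X (i, 2) : MvPolynomial (Fin 3 × Fin 3) k) - s02 k (i, 2) ∈ _
    have h3 : (X (i, 2) : MvPolynomial (Fin 3 × Fin 3) k) - s02 k (i, 2) = -vv k i := by
      simp [s02, vv]
    rw [h3]
    exact neg_mem (vv_mem i)

lemma sub_s12_mem (a : MvPolynomial (Fin 3 × Fin 3) k) :
    a - aeval (s12 k) a ∈
      Ideal.span ({ww k 0, ww k 1, ww k 2} : Set (MvPolynomial (Fin 3 × Fin 3) k)) := by
  refine Ideal.span_le.mpr ?_ (sub_aeval_mem (s12 k) a)
  rintro x ⟨⟨i, c⟩, rfl⟩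
  fin_cases c
  · simp [s12]
  · simp [s12]
  · show (X (i, 2) : MvPolynomial (Fin 3 × Fin 3) k) - s12 k (i, 2) ∈ _
    have h3 : (X (i, 2) : MvPolynomial (Fin 3 × Fin 3) k) - s12 k (i, 2) = ww k i := by
      simp [s12, ww]
    rw [h3]
    exact ww_mem i

lemma sub_sr_dvd (m : Fin 3) (a : MvPolynomial (Fin 3 × Fin 3) k) :
    ∃ c, a - aeval (sr k m) a = uu k m * c := by
  have h1 := sub_aeval_mem (sr k m) a
  have h2 : Ideal.span (Set.range fun v => (X v : MvPolynomial (Fin 3 × Fin 3) k) - sr k m v)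
      ≤ Ideal.span ({uu k m} : Set (MvPolynomial (Fin 3 × Fin 3) k)) := by
    refine Ideal.span_le.mpr ?_
    rintro x ⟨v, rfl⟩
    by_cases hv : v = (m, 1)
    · subst hv
      show (X (m, 1) : MvPolynomial (Fin 3 × Fin 3) k) - sr k m (m, 1) ∈ _
      have h3 : (X (m, 1) : MvPolynomial (Fin 3 × Fin 3) k) - sr k m (m, 1) = -uu k m := by
        simp [sr, uu]
      rw [h3]
      exact neg_mem (Ideal.subset_span rfl)
    · show (X v : MvPolynomial (Fin 3 × Fin 3) k) - sr k m v ∈ _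
      have h3 : (X v : MvPolynomial (Fin 3 × Fin 3) k) - sr k m v = 0 := by
        simp [sr, hv]
      rw [h3]
      exact zero_mem _
  obtain ⟨c, hc⟩ := Ideal.mem_span_singleton'.mp (h2 h1)
  exact ⟨c, by rw [← hc]; ring⟩

end AlternatingDiagonalAux3

namespace AlternatingDiagonalAux4
open AlternatingDiagonalAux AlternatingDiagonalAux2 AlternatingDiagonalAux3
variable {k : Type*} [Field k] [CharZero k]

lemma K2 (A B : MvPolynomial (Fin 3 × Fin 3) k) (h : uu k 0 * A + uu k 1 * B = 0) :
    ∃ β, A = uu k 1 * β ∧ B = -(uu k 0) * β := by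
  have h1 := congrArg (aeval (sr k 1)) h
  have e0 : aeval (sr k 1) (uu k 0) = uu k 0 := by simp [uu, sr, Prod.ext_iff]
  have e1 : aeval (sr k 1) (uu k 1) = 0 := by simp [uu, sr, Prod.ext_iff]
  rw [map_add, map_mul, map_mul, e0, e1, zero_mul, add_zero, map_zero] at h1
  have hA0 : aeval (sr k 1) A = 0 := by
    rcases mul_eq_zero.mp h1 with h' | h'
    · exact absurd h' (uu_ne_zero 0)
    · exact h'
  obtain ⟨c, hc⟩ := sub_sr_dvd 1 A
  rw [hA0, sub_zero] at hc
  have h5 : uu k 1 * (uu k 0 * c + B) = 0 := by linear_combination h - uu k 0 * hc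
  have h6 : uu k 0 * c + B = 0 := by
    rcases mul_eq_zero.mp h5 with h' | h'
    · exact absurd h' (uu_ne_zero 1)
    · exact h'
  exact ⟨c, hc, by linear_combination h6⟩

lemma K3 (a0 a1 a2 : MvPolynomial (Fin 3 × Fin 3) k)
    (h : uu k 0 * a0 + uu k 1 * a1 + uu k 2 * a2 = 0) :
    ∃ b01 b02 b12, a0 = uu k 1 * b01 + uu k 2 * b02 ∧
      a1 = -(uu k 0) * b01 + uu k 2 * b12 ∧ a2 = -(uu k 0) * b02 - uu k 1 * b12 := by
  have h1 := congrArg (aeval (sr k 2)) h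
  have e0 : aeval (sr k 2) (uu k 0) = uu k 0 := by simp [uu, sr, Prod.ext_iff]
  have e1 : aeval (sr k 2) (uu k 1) = uu k 1 := by simp [uu, sr, Prod.ext_iff]
  have e2 : aeval (sr k 2) (uu k 2) = 0 := by simp [uu, sr, Prod.ext_iff]
  rw [map_add, map_add, map_mul, map_mul, map_mul, e0, e1, e2, zero_mul, add_zero,
    map_zero] at h1
  obtain ⟨β, hA0, hA1⟩ := K2 _ _ h1
  obtain ⟨c0, hc0⟩ := sub_sr_dvd 2 a0
  obtain ⟨c1, hc1⟩ := sub_sr_dvd 2 a1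
  have ha0 : a0 = uu k 1 * β + uu k 2 * c0 := by linear_combination hc0 + hA0
  have ha1 : a1 = -(uu k 0) * β + uu k 2 * c1 := by linear_combination hc1 + hA1
  have h6 : uu k 2 * (uu k 0 * c0 + uu k 1 * c1 + a2) = 0 := by
    linear_combination h - uu k 0 * ha0 - uu k 1 * ha1
  have h7 : uu k 0 * c0 + uu k 1 * c1 + a2 = 0 := by
    rcases mul_eq_zero.mp h6 with h' | h'
    · exact absurd h' (uu_ne_zero 2)
    · exact h'
  exact ⟨β, c0, c1, ha0, ha1, by linear_combination h7⟩

lemma lemP (c00 c01 c02 c10 c11 c12 c20 c21 c22 : MvPolynomial (Fin 3 × Fin 3) k)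
    (h : uu k 0 * uu k 0 * c00 + uu k 0 * uu k 1 * c01 + uu k 0 * uu k 2 * c02 +
         uu k 1 * uu k 0 * c10 + uu k 1 * uu k 1 * c11 + uu k 1 * uu k 2 * c12 +
         uu k 2 * uu k 0 * c20 + uu k 2 * uu k 1 * c21 + uu k 2 * uu k 2 * c22 = 0) :
    ∃ e1 e2 e3,
      uu k 0 * vv k 0 * c00 + uu k 0 * vv k 1 * c01 + uu k 0 * vv k 2 * c02 +
      uu k 1 * vv k 0 * c10 + uu k 1 * vv k 1 * c11 + uu k 1 * vv k 2 * c12 +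
      uu k 2 * vv k 0 * c20 + uu k 2 * vv k 1 * c21 + uu k 2 * vv k 2 * c22
        = e1 * MM k 0 1 + e2 * MM k 0 2 + e3 * MM k 1 2 := by
  obtain ⟨b01, b02, b12, hA0, hA1, hA2⟩ :=
    K3 (uu k 0 * c00 + uu k 1 * c01 + uu k 2 * c02)
       (uu k 0 * c10 + uu k 1 * c11 + uu k 2 * c12)
       (uu k 0 * c20 + uu k 1 * c21 + uu k 2 * c22) (by linear_combination h)
  obtain ⟨p01, p02, p12, hp0, hp1, hp2⟩ :=
    K3 c00 (c01 - b01) (c02 - b02) (by linear_combination hA0)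
  obtain ⟨q01, q02, q12, hq0, hq1, hq2⟩ :=
    K3 (c10 + b01) c11 (c12 - b12) (by linear_combination hA1)
  obtain ⟨t01, t02, t12, ht0, ht1, ht2⟩ :=
    K3 (c20 + b02) (c21 + b12) c22 (by linear_combination hA2)
  refine ⟨b01 - uu k 0 * p01 - uu k 1 * q01 - uu k 2 * t01,
         b02 - uu k 0 * p02 - uu k 1 * q02 - uu k 2 * t02,
         b12 - uu k 0 * p12 - uu k 1 * q12 - uu k 2 * t12, ?_⟩
  simp only [MM]
  linear_combination (uu k 0 * vv k 0) * hp0 + (uu k 0 * vv k 1) * hp1 +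
    (uu k 0 * vv k 2) * hp2 + (uu k 1 * vv k 0) * hq0 + (uu k 1 * vv k 1) * hq1 +
    (uu k 1 * vv k 2) * hq2 + (uu k 2 * vv k 0) * ht0 + (uu k 2 * vv k 1) * ht1 +
    (uu k 2 * vv k 2) * ht2

lemma MM_mem (i j : Fin 3) : MM k i j ∈ Ideal.span (Sset k) :=
  Ideal.subset_span (MM_alt i j)

lemma TT_mem (i j l : Fin 3) : TT k i j l ∈ Ideal.span (Sset k) := by
  have cert : (6 : MvPolynomial (Fin 3 × Fin 3) k) * TT k i j l
      = QQ k i j l - uu k i * MM k j l + (2 * ww k l + uu k l) * MM k i j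
        - (uu k j + 2 * vv k j) * MM k i l := by
    simp only [QQ, TT, MM, uu, vv, ww]; ring
  have h6 : (6 : MvPolynomial (Fin 3 × Fin 3) k) * TT k i j l ∈ Ideal.span (Sset k) := by
    rw [cert]
    exact Ideal.sub_mem _ (Ideal.add_mem _ (Ideal.sub_mem _
      (Ideal.subset_span (QQ_alt i j l)) (Ideal.mul_mem_left _ _ (MM_mem j l)))
      (Ideal.mul_mem_left _ _ (MM_mem i j))) (Ideal.mul_mem_left _ _ (MM_mem i l))
  have h8 : ((6 : MvPolynomial (Fin 3 × Fin 3) k)) = C (6 : k) :=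
    (map_ofNat (C : k →+* MvPolynomial (Fin 3 × Fin 3) k) 6).symm
  have h7 : TT k i j l = C ((6 : k)⁻¹) * ((6 : MvPolynomial (Fin 3 × Fin 3) k) * TT k i j l) := by
    rw [h8, ← mul_assoc, ← C_mul, inv_mul_cancel₀ (by norm_num : (6:k) ≠ 0), C_1, one_mul]
  rw [h7]
  exact Ideal.mul_mem_left _ _ h6

end AlternatingDiagonalAux4
section Main
open AlternatingDiagonalAux AlternatingDiagonalAux2 AlternatingDiagonalAux3 AlternatingDiagonalAux4

/-- For `n = d = 3` (a `3 × 3` matrix of variables, with `S_3` permuting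
the three columns), the ideal `J_3` generated by the alternating polynomials equals the
vanishing ideal `I(Δ_3)` of the big diagonal (the locus where two distinct columns
coincide). -/
theorem alternating_ideal_eq_diagonal_ideal_three_points
    {k : Type*} [Field k] [CharZero k] (f : MvPolynomial (Fin 3 × Fin 3) k) :
    f ∈ Ideal.span {g : MvPolynomial (Fin 3 × Fin 3) k |
        ∀ σ : Equiv.Perm (Fin 3),
          rename (fun p : Fin 3 × Fin 3 => (p.1, σ p.2)) g = (Equiv.Perm.sign σ : ℤ) • g} ↔
      ∀ p : Fin 3 × Fin 3 → k,
        (∃ j j' : Fin 3, j ≠ j' ∧ ∀ i : Fin 3, p (i, j) = p (i, j')) → eval p f = 0 := by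
  constructor
  · -- easy direction
    intro hf p hp
    obtain ⟨j, j', hne, hcol⟩ := hp
    have hker : Ideal.span (Sset k) ≤ RingHom.ker (eval p) := by
      rw [Ideal.span_le]
      intro g hg
      simp only [SetLike.mem_coe, RingHom.mem_ker]
      have hgσ := hg (Equiv.swap j j')
      have hmap : p ∘ (fun q : Fin 3 × Fin 3 => (q.1, Equiv.swap j j' q.2)) = p := by
        funext v
        obtain ⟨i, c⟩ := v
        simp only [Function.comp_apply]
        rcases eq_or_ne c j with rfl | hj
        · rw [Equiv.swap_apply_left]; exact (hcol i).symm
        · rcases eq_or_ne c j' with rfl | hj'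
          · rw [Equiv.swap_apply_right]; exact hcol i
          · rw [Equiv.swap_apply_of_ne_of_ne hj hj']
      have heval := congrArg (eval p) hgσ
      rw [eval_rename, hmap, Equiv.Perm.sign_swap hne,
        show (((-1 : ℤˣ)) : ℤ) = -1 from rfl, neg_one_zsmul, map_neg] at heval
      have h2 : (2 : k) * eval p g = 0 := by linear_combination heval
      rcases mul_eq_zero.mp h2 with h' | h'
      · exact absurd h' two_ne_zero
      · exact h'
    exact RingHom.mem_ker.mp (hker hf)
  · -- hard direction
    intro hf
    have h01 : aeval (s01 k) f = 0 := by
      apply MvPolynomial.funext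
      intro x
      rw [eval_aeval, map_zero]
      refine hf _ ⟨0, 1, by decide, fun i => ?_⟩
      simp [s01]
    have h02 : aeval (s02 k) f = 0 := by
      apply MvPolynomial.funext
      intro x
      rw [eval_aeval, map_zero]
      refine hf _ ⟨0, 2, by decide, fun i => ?_⟩
      simp [s02]
    have h12 : aeval (s12 k) f = 0 := by
      apply MvPolynomial.funext
      intro x
      rw [eval_aeval, map_zero]
      refine hf _ ⟨1, 2, by decide, fun i => ?_⟩
      simp [s12]
    obtain ⟨a0, a1, a2, hfa⟩ := mem_span_triple (mem_span_uu_of_s01 f h01)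
    have hzero2 : uu k 0 * aeval (s02 k) a0 + uu k 1 * aeval (s02 k) a1 +
        uu k 2 * aeval (s02 k) a2 = 0 := by
      have h := congrArg (aeval (s02 k)) hfa
      rw [h02, map_add, map_add, map_mul, map_mul, map_mul, s02_uu, s02_uu, s02_uu] at h
      linear_combination -h
    obtain ⟨g00, g01, g02, hg0⟩ := mem_span_triple (sub_s02_mem (k := k) a0)
    obtain ⟨g10, g11, g12, hg1⟩ := mem_span_triple (sub_s02_mem (k := k) a1)
    obtain ⟨g20, g21, g22, hg2⟩ := mem_span_triple (sub_s02_mem (k := k) a2)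
    have hf2 : f = uu k 0 * vv k 0 * g00 + uu k 0 * vv k 1 * g01 + uu k 0 * vv k 2 * g02 +
        uu k 1 * vv k 0 * g10 + uu k 1 * vv k 1 * g11 + uu k 1 * vv k 2 * g12 +
        uu k 2 * vv k 0 * g20 + uu k 2 * vv k 1 * g21 + uu k 2 * vv k 2 * g22 := by
      linear_combination hfa + uu k 0 * hg0 + uu k 1 * hg1 + uu k 2 * hg2 + hzero2
    have h4 : uu k 0 * uu k 0 * aeval (s12 k) g00 + uu k 0 * uu k 1 * aeval (s12 k) g01 +
        uu k 0 * uu k 2 * aeval (s12 k) g02 + uu k 1 * uu k 0 * aeval (s12 k) g10 +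
        uu k 1 * uu k 1 * aeval (s12 k) g11 + uu k 1 * uu k 2 * aeval (s12 k) g12 +
        uu k 2 * uu k 0 * aeval (s12 k) g20 + uu k 2 * uu k 1 * aeval (s12 k) g21 +
        uu k 2 * uu k 2 * aeval (s12 k) g22 = 0 := by
      have h := congrArg (aeval (s12 k)) hf2
      rw [h12] at h
      simp only [map_add, map_mul, s12_uu, s12_vv] at h
      linear_combination -h
    obtain ⟨e1, e2, e3, hP⟩ := lemP (aeval (s12 k) g00) (aeval (s12 k) g01) (aeval (s12 k) g02)
      (aeval (s12 k) g10) (aeval (s12 k) g11) (aeval (s12 k) g12)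
      (aeval (s12 k) g20) (aeval (s12 k) g21) (aeval (s12 k) g22) h4
    obtain ⟨m000, m001, m002, hw00⟩ := mem_span_triple (sub_s12_mem (k := k) g00)
    obtain ⟨m010, m011, m012, hw01⟩ := mem_span_triple (sub_s12_mem (k := k) g01)
    obtain ⟨m020, m021, m022, hw02⟩ := mem_span_triple (sub_s12_mem (k := k) g02)
    obtain ⟨m100, m101, m102, hw10⟩ := mem_span_triple (sub_s12_mem (k := k) g10)
    obtain ⟨m110, m111, m112, hw11⟩ := mem_span_triple (sub_s12_mem (k := k) g11)
    obtain ⟨m120, m121, m122, hw12⟩ := mem_span_triple (sub_s12_mem (k := k) g12)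
    obtain ⟨m200, m201, m202, hw20⟩ := mem_span_triple (sub_s12_mem (k := k) g20)
    obtain ⟨m210, m211, m212, hw21⟩ := mem_span_triple (sub_s12_mem (k := k) g21)
    obtain ⟨m220, m221, m222, hw22⟩ := mem_span_triple (sub_s12_mem (k := k) g22)
    have hfinal : f =
        m000 * TT k 0 0 0 + m001 * TT k 0 0 1 + m002 * TT k 0 0 2 +
        m010 * TT k 0 1 0 + m011 * TT k 0 1 1 + m012 * TT k 0 1 2 +
        m020 * TT k 0 2 0 + m021 * TT k 0 2 1 + m022 * TT k 0 2 2 +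
        m100 * TT k 1 0 0 + m101 * TT k 1 0 1 + m102 * TT k 1 0 2 +
        m110 * TT k 1 1 0 + m111 * TT k 1 1 1 + m112 * TT k 1 1 2 +
        m120 * TT k 1 2 0 + m121 * TT k 1 2 1 + m122 * TT k 1 2 2 +
        m200 * TT k 2 0 0 + m201 * TT k 2 0 1 + m202 * TT k 2 0 2 +
        m210 * TT k 2 1 0 + m211 * TT k 2 1 1 + m212 * TT k 2 1 2 +
        m220 * TT k 2 2 0 + m221 * TT k 2 2 1 + m222 * TT k 2 2 2 +
        e1 * MM k 0 1 + e2 * MM k 0 2 + e3 * MM k 1 2 := by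
      simp only [TT]
      linear_combination hf2 + hP +
        (uu k 0 * vv k 0) * hw00 + (uu k 0 * vv k 1) * hw01 + (uu k 0 * vv k 2) * hw02 +
        (uu k 1 * vv k 0) * hw10 + (uu k 1 * vv k 1) * hw11 + (uu k 1 * vv k 2) * hw12 +
        (uu k 2 * vv k 0) * hw20 + (uu k 2 * vv k 1) * hw21 + (uu k 2 * vv k 2) * hw22
    have hmem : f ∈ Ideal.span (Sset k) := by
      rw [hfinal]
      repeat' apply Ideal.add_mem
      all_goals first
        | exact Ideal.mul_mem_left _ _ (TT_mem _ _ _)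
        | exact Ideal.mul_mem_left _ _ (MM_mem _ _)
    exact hmem

end Main
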